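/- Let A be a Noetherian integral domain with fraction field K, and let C be a bounded complex of finite free A-modules. Let u ∈ H^i(C) be a cohomology class whose image in H^i(C ⊗_A K) is nonzero. Then there exists a nonzero f ∈ A such that for every field k and every ring homomorphism A_f → k, the image of u in H^i(C ⊗_A k) is nonzero. -/

import Mathlib

open scoped TensorProduct

set_option maxHeartbeats 1000000 in
/-- Let `C` be a bounded cochain complex of finite free modules over a
Noetherian domain `A`, and let `u` be a cocycle in degree `j+1` whose
cohomology class has nonzero image in `H^{j+1}(C ⊗_A K)` (equivalently, since
`1 ⊗ u` is automatically a cocycle, `1 ⊗ u` is not a coboundary). Then there is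
a nonzero `f ∈ A` such that for every field `k` and ring homomorphism
`A_f → k` (i.e. `A`-algebra structure on `k` with `f ↦` a nonzero element),
the image of the class of `u` in `H^{j+1}(C ⊗_A k)` is nonzero. -/
theorem generic_nonvanishing_cohomology
    {A : Type*} [CommRing A] [IsDomain A] [IsNoetherianRing A]
    (C : ℤ → Type*) [∀ i, AddCommGroup (C i)] [∀ i, Module A (C i)]
    [∀ i, Module.Finite A (C i)] [∀ i, Module.Free A (C i)]
    (d : ∀ i : ℤ, C i →ₗ[A] C (i + 1))
    (hd : ∀ (i : ℤ) (x : C i), d (i + 1) (d i x) = 0)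
    (hbdd : ∃ a b : ℤ, ∀ i : ℤ, i < a ∨ b < i → Subsingleton (C i))
    (j : ℤ) (u : C (j + 1)) (hu : d (j + 1) u = 0)
    (hK : (1 : FractionRing A) ⊗ₜ[A] u ∉
      LinearMap.range (LinearMap.baseChange (FractionRing A) (d j))) :
    ∃ f : A, f ≠ 0 ∧
      ∀ (k : Type) [Field k] [Algebra A k], algebraMap A k f ≠ 0 →
        (1 : k) ⊗ₜ[A] u ∉ LinearMap.range (LinearMap.baseChange k (d j)) := by
  classical
  set K := FractionRing A
  set W : Submodule K (K ⊗[A] C (j + 1)) :=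
    LinearMap.range (LinearMap.baseChange K (d j)) with hW
  -- a functional on `K ⊗ C (j+1)` killing `W` and nonzero at `1 ⊗ u`
  have hq : W.mkQ ((1 : K) ⊗ₜ[A] u) ≠ 0 := by
    simpa [Submodule.Quotient.mk_eq_zero] using hK
  obtain ⟨μ, hμ⟩ : ∃ μ : Module.Dual K ((K ⊗[A] C (j + 1)) ⧸ W),
      μ (W.mkQ ((1 : K) ⊗ₜ[A] u)) ≠ 0 := by
    by_contra h
    push_neg at h
    exact hq ((Module.forall_dual_apply_eq_zero_iff K _).mp h)
  set lam : (K ⊗[A] C (j + 1)) →ₗ[K] K := μ.comp W.mkQ with hlam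
  have hlamW : ∀ w ∈ W, lam w = 0 := by
    intro w hw
    have : W.mkQ w = 0 := (Submodule.Quotient.mk_eq_zero W).mpr hw
    simp [hlam, this]
  -- the `A`-linear map `m ↦ lam (1 ⊗ m)` into `K`
  set ψ : C (j + 1) →ₗ[A] K :=
    (lam.restrictScalars A).comp ((TensorProduct.mk A K (C (j + 1))) 1) with hψ
  have hψd : ∀ x : C j, ψ (d j x) = 0 := by
    intro x
    have hmem : ((1 : K) ⊗ₜ[A] (d j x)) ∈ W :=
      ⟨(1 : K) ⊗ₜ[A] x, by simp [LinearMap.baseChange_tmul]⟩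
    simpa [hψ] using hlamW _ hmem
  -- clear denominators
  obtain ⟨s, hs⟩ := Module.Finite.fg_top (R := A) (M := C (j + 1))
  obtain ⟨b, hb⟩ := IsLocalization.exist_integer_multiples (nonZeroDivisors A) s
    (fun m : C (j + 1) => ψ m)
  have hball : ∀ m : C (j + 1), ((b : A) • ψ) m ∈ LinearMap.range (Algebra.linearMap A K) := by
    intro m
    have hle : Submodule.span A (s : Set (C (j + 1))) ≤ Submodule.comap ((b : A) • ψ)
        (LinearMap.range (Algebra.linearMap A K)) := by
      refine Submodule.span_le.mpr ?_
      intro x hx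
      obtain ⟨a, ha⟩ := hb x hx
      exact ⟨a, by simpa using ha⟩
    exact hle (by rw [hs]; exact Submodule.mem_top)
  -- the `A`-valued functional
  have hinj : Function.Injective (Algebra.linearMap A K) := IsFractionRing.injective A K
  let e : A ≃ₗ[A] LinearMap.range (Algebra.linearMap A K) :=
    LinearEquiv.ofInjective (Algebra.linearMap A K) hinj
  let ρ : C (j + 1) →ₗ[A] LinearMap.range (Algebra.linearMap A K) :=
    ((b : A) • ψ).codRestrict (LinearMap.range (Algebra.linearMap A K)) hball
  let φ : C (j + 1) →ₗ[A] A := e.symm.toLinearMap.comp ρ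
  have hφval : ∀ m : C (j + 1), algebraMap A K (φ m) = (b : A) • ψ m := by
    intro m
    have h1 : e (φ m) = ρ m := e.apply_symm_apply (ρ m)
    have h2 : ((e (φ m) : K)) = algebraMap A K (φ m) :=
      LinearEquiv.ofInjective_apply (f := Algebra.linearMap A K) (h := hinj) (φ m)
    rw [h1] at h2
    exact h2.symm
  have hφd : ∀ x : C j, φ (d j x) = 0 := by
    intro x
    apply hinj
    show algebraMap A K (φ (d j x)) = algebraMap A K 0
    rw [hφval, hψd, smul_zero, map_zero]
  have hψu : ψ u ≠ 0 := hμ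
  -- the candidate `f`
  refine ⟨φ u, ?_, ?_⟩
  · intro h0
    have h1 : (0 : K) = (b : A) • ψ u := by
      rw [← hφval, h0, map_zero]
    haveI : Module.IsTorsionFree A K := Module.isTorsionFree_iff_algebraMap_injective.mpr hinj
    rcases smul_eq_zero.mp h1.symm with h | h
    · exact nonZeroDivisors.coe_ne_zero b h
    · exact hψu h
  · intro k _ _ hk hmem
    obtain ⟨z, hz⟩ := hmem
    set Φ : (k ⊗[A] C (j + 1)) →ₗ[k] k :=
      LinearMap.liftBaseChange k ((Algebra.linearMap A k).comp φ) with hΦ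
    have key : ∀ w : k ⊗[A] C j, Φ (LinearMap.baseChange k (d j) w) = 0 := by
      intro w
      induction w using TensorProduct.induction_on with
      | zero => simp
      | tmul c x =>
          rw [LinearMap.baseChange_tmul, hΦ, LinearMap.liftBaseChange_tmul]
          rw [LinearMap.comp_apply, hφd x]
          simp
      | add y z hy hz => simp only [map_add, hy, hz, add_zero]
    have hΦz := key z
    rw [hz] at hΦz
    have hfin : Φ ((1 : k) ⊗ₜ[A] u) = algebraMap A k (φ u) := by
      rw [hΦ, LinearMap.liftBaseChange_tmul, LinearMap.comp_apply, one_smul]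
      rfl
    rw [hΦz] at hfin
    exact hk hfin.symm
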